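/- Let dim₁(·|·) and dim₂(·|·) be bivariant Sylvester module rank functions for a unital ring R. If dim₁(M|M) = dim₂(M|M) for all finitely presented left R-modules M, then dim₁ = dim₂, i.e. dim₁(M₁|M₂) = dim₂(M₁|M₂) for all pairs of modules M₁ ⊆ M₂. -/

import Mathlib

universe u
open scoped NNReal ENNReal

/-- A bivariant Sylvester module rank function for a unital ring `R`: to each pair of left
`R`-modules `N ⊆ M` (encoded as a submodule `N` of a module `M`) it assigns a value
`d M N ∈ ℝ≥0∞`, thought of as `dim(N|M)`, satisfying isomorphism invariance, normalization,
direct sum additivity, the two continuity conditions, and additivity. -/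
structure BivariantSylvesterRank (R : Type u) [Ring R] where
  d : ∀ (M : Type u) [AddCommGroup M] [Module R M], Submodule R M → ℝ≥0∞
  iso_invariant : ∀ (M N : Type u) [AddCommGroup M] [Module R M] [AddCommGroup N] [Module R N]
      (e : M ≃ₗ[R] N) (p : Submodule R M),
      d M p = d N (p.map (e : M →ₗ[R] N))
  d_zero : d PUnit ⊤ = 0
  d_ring : d R ⊤ = 1
  d_prod : ∀ (M N : Type u) [AddCommGroup M] [Module R M] [AddCommGroup N] [Module R N]
      (p : Submodule R M) (q : Submodule R N),
      d (M × N) (p.prod q) = d M p + d N q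
  continuity_sup : ∀ (M : Type u) [AddCommGroup M] [Module R M] (p : Submodule R M),
      d M p = ⨆ (p' : {p' : Submodule R M // p'.FG ∧ p' ≤ p}), d M p'.1
  continuity_inf : ∀ (M : Type u) [AddCommGroup M] [Module R M] (p : Submodule R M), p.FG →
      d M p = ⨅ (q : {q : Submodule R M // q.FG ∧ p ≤ q}), d q.1 (p.comap q.1.subtype)
  additivity : ∀ (M : Type u) [AddCommGroup M] [Module R M] (p : Submodule R M),
      d M ⊤ = d M p + d (M ⧸ p) ⊤

section Aux
variable {R : Type u} [Ring R]

lemma BSR_top_congr (dim : BivariantSylvesterRank R) (M N : Type u) [AddCommGroup M] [Module R M]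
    [AddCommGroup N] [Module R N] (e : M ≃ₗ[R] N) : dim.d M ⊤ = dim.d N ⊤ := by
  rw [dim.iso_invariant M N e ⊤, Submodule.map_top, LinearEquiv.range]

lemma BSR_free (dim : BivariantSylvesterRank R) : ∀ n : ℕ, dim.d (Fin n → R) ⊤ = n := by
  intro n
  induction n with
  | zero =>
    have e : (Fin 0 → R) ≃ₗ[R] PUnit.{u+1} := LinearEquiv.ofSubsingleton _ _
    rw [BSR_top_congr dim _ _ e, dim.d_zero, Nat.cast_zero]
  | succ n ih =>
    have e : (Fin (n + 1) → R) ≃ₗ[R] R × (Fin n → R) :=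
      { (Fin.consEquiv (fun _ : Fin (n + 1) => R)).symm with
        map_add' := fun _ _ => rfl
        map_smul' := fun _ _ => rfl }
    have htop : (Submodule.prod ⊤ ⊤ : Submodule R (R × (Fin n → R))) = ⊤ := by
      ext x; simp
    rw [BSR_top_congr dim _ _ e, ← htop, dim.d_prod, dim.d_ring, ih]
    push_cast
    ring

lemma BSR_fin_ne_top (dim : BivariantSylvesterRank R) (M : Type u) [AddCommGroup M] [Module R M]
    (hM : Module.Finite R M) : dim.d M ⊤ ≠ ⊤ := by
  obtain ⟨n, f, hf⟩ := Module.Finite.exists_fin' R M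
  have e : ((Fin n → R) ⧸ LinearMap.ker f) ≃ₗ[R] M := f.quotKerEquivOfSurjective hf
  have h1 := dim.additivity (Fin n → R) (LinearMap.ker f)
  rw [BSR_free dim n] at h1
  have hle : dim.d ((Fin n → R) ⧸ LinearMap.ker f) ⊤ ≤ (n : ℝ≥0∞) := h1 ▸ le_add_self
  rw [← BSR_top_congr dim _ _ e]
  exact fun hc => (by simp [hc] at hle : False)

lemma BSR_eq_fg (dim₁ dim₂ : BivariantSylvesterRank R)
    (h : ∀ (M : Type u) [AddCommGroup M] [Module R M],
      Module.FinitePresentation R M → dim₁.d M ⊤ = dim₂.d M ⊤)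
    (M : Type u) [AddCommGroup M] [Module R M] (hM : Module.Finite R M) :
    dim₁.d M ⊤ = dim₂.d M ⊤ := by
  obtain ⟨n, f, hf⟩ := Module.Finite.exists_fin' R M
  set K := LinearMap.ker f with hK
  have e : ((Fin n → R) ⧸ K) ≃ₗ[R] M := f.quotKerEquivOfSurjective hf
  -- the two dims agree on d (Fin n → R) K
  have key : dim₁.d (Fin n → R) K = dim₂.d (Fin n → R) K := by
    rw [dim₁.continuity_sup, dim₂.continuity_sup]
    refine iSup_congr fun p => ?_
    obtain ⟨p, hpfg, -⟩ := p
    have hfp : Module.FinitePresentation R ((Fin n → R) ⧸ p) :=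
      Module.finitePresentation_of_free_of_surjective p.mkQ p.mkQ_surjective
        (by rwa [Submodule.ker_mkQ])
    have h1 := dim₁.additivity (Fin n → R) p
    have h2 := dim₂.additivity (Fin n → R) p
    rw [BSR_free dim₁ n] at h1
    rw [BSR_free dim₂ n] at h2
    have hb : dim₁.d ((Fin n → R) ⧸ p) ⊤ = dim₂.d ((Fin n → R) ⧸ p) ⊤ := h _ hfp
    have hbne : dim₁.d ((Fin n → R) ⧸ p) ⊤ ≠ ⊤ := by
      intro hc
      rw [hc, add_top] at h1
      exact (ENNReal.natCast_ne_top n) h1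
    have : dim₁.d (Fin n → R) p + dim₁.d ((Fin n → R) ⧸ p) ⊤ =
        dim₂.d (Fin n → R) p + dim₁.d ((Fin n → R) ⧸ p) ⊤ := by
      rw [← h1]
      rw [hb]
      exact h2
    exact (ENNReal.add_left_inj hbne).mp this
  -- finish
  have h1 := dim₁.additivity (Fin n → R) K
  have h2 := dim₂.additivity (Fin n → R) K
  rw [BSR_free dim₁ n] at h1
  rw [BSR_free dim₂ n] at h2
  have hane : dim₁.d (Fin n → R) K ≠ ⊤ := by
    intro hc
    rw [hc, top_add] at h1
    exact (ENNReal.natCast_ne_top n) h1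
  have : dim₁.d (Fin n → R) K + dim₁.d ((Fin n → R) ⧸ K) ⊤ =
      dim₁.d (Fin n → R) K + dim₂.d ((Fin n → R) ⧸ K) ⊤ := by
    rw [← h1, h2, key]
  have hq : dim₁.d ((Fin n → R) ⧸ K) ⊤ = dim₂.d ((Fin n → R) ⧸ K) ⊤ :=
    (ENNReal.add_right_inj hane).mp this
  rw [← BSR_top_congr dim₁ _ _ e, ← BSR_top_congr dim₂ _ _ e, hq]

lemma BSR_pair_fg (dim₁ dim₂ : BivariantSylvesterRank R)
    (h : ∀ (M : Type u) [AddCommGroup M] [Module R M],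
      Module.FinitePresentation R M → dim₁.d M ⊤ = dim₂.d M ⊤)
    (Q : Type u) [AddCommGroup Q] [Module R Q] (hQ : Module.Finite R Q)
    (p : Submodule R Q) : dim₁.d Q p = dim₂.d Q p := by
  have hQp : Module.Finite R (Q ⧸ p) := Module.Finite.quotient R p
  have h1 := dim₁.additivity Q p
  have h2 := dim₂.additivity Q p
  have hc : dim₁.d Q ⊤ = dim₂.d Q ⊤ := BSR_eq_fg dim₁ dim₂ h Q hQ
  have hb : dim₁.d (Q ⧸ p) ⊤ = dim₂.d (Q ⧸ p) ⊤ := BSR_eq_fg dim₁ dim₂ h (Q ⧸ p) hQp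
  have hbne : dim₁.d (Q ⧸ p) ⊤ ≠ ⊤ := BSR_fin_ne_top dim₁ (Q ⧸ p) hQp
  have : dim₁.d Q p + dim₁.d (Q ⧸ p) ⊤ = dim₂.d Q p + dim₁.d (Q ⧸ p) ⊤ := by
    rw [← h1, hc, h2, hb]
  exact (ENNReal.add_left_inj hbne).mp this

end Aux

/-- uniqueness. If two bivariant Sylvester module rank functions for a
unital ring `R` agree on `dim(M|M)` for all finitely presented modules `M`, then they are
equal on all pairs of modules. -/
theorem bivariantSylvesterRank_eq_of_eq_on_finitePresentation (R : Type u) [Ring R]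
    (dim₁ dim₂ : BivariantSylvesterRank R)
    (h : ∀ (M : Type u) [AddCommGroup M] [Module R M],
      Module.FinitePresentation R M → dim₁.d M ⊤ = dim₂.d M ⊤) :
    ∀ (M : Type u) [AddCommGroup M] [Module R M] (N : Submodule R M),
      dim₁.d M N = dim₂.d M N := by
  intro M _ _ N
  rw [dim₁.continuity_sup, dim₂.continuity_sup]
  refine iSup_congr fun p => ?_
  obtain ⟨p, hpfg, -⟩ := p
  rw [dim₁.continuity_inf M p hpfg, dim₂.continuity_inf M p hpfg]
  refine iInf_congr fun q => ?_
  have : Module.Finite R q.1 := Module.Finite.iff_fg.mpr q.2.1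
  exact BSR_pair_fg dim₁ dim₂ h q.1 this (p.comap q.1.subtype)
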